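/- Let a, b ∈ ℝ with a + 2b > 0 and a − 2b > 0. If (x, y) ∈ ℝ² satisfies the system a·x³ + 3b·x²y + a·xy² + b·y³ = 0 and b·x³ + a·x²y + 3b·xy² + a·y³ = 0, then x = 0 and y = 0. -/
import Mathlib

open MeasureTheory Set Filter

noncomputable section

theorem statement11 (a b : ℝ) (h₁ : 0 < a + 2 * b) (h₂ : 0 < a - 2 * b) (x y : ℝ)
    (e₁ : a * x ^ 3 + 3 * b * x ^ 2 * y + a * x * y ^ 2 + b * y ^ 3 = 0)
    (e₂ : b * x ^ 3 + a * x ^ 2 * y + 3 * b * x * y ^ 2 + a * y ^ 3 = 0) :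
    x = 0 ∧ y = 0 := by
  have key : (x ^ 2 + y ^ 2) * (a * (x ^ 2 + y ^ 2) + 4 * b * (x * y)) = 0 := by
    linear_combination x * e₁ + y * e₂
  have h3 : x ^ 2 + y ^ 2 = 0 := by
    rcases mul_eq_zero.mp key with h | h
    · exact h
    · by_contra hne
      have hx : 0 < x ^ 2 + y ^ 2 := lt_of_le_of_ne (by positivity) (Ne.symm hne)
      rcases le_or_gt b 0 with hb | hb
      · nlinarith [mul_pos h₁ hx, sq_nonneg (x - y)]
      · nlinarith [mul_pos h₂ hx, sq_nonneg (x + y)]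
  constructor <;> nlinarith [sq_nonneg x, sq_nonneg y]
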